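/- For every s ∈ (1, 5/3]: s² K̃_{1,2}''(s) + s K̃_{1,2}'(s) > 0. Equivalently, the function W(x) = K̃_{1,2}(e^x) satisfies W''(x) > 0 for all x ∈ (0, log(5/3)]. -/

import Mathlib

set_option maxHeartbeats 1600000

open Real Set

/-- The kernel `K̃_{1,2}(s)` (simplified form, valid for `s > 1`). -/
noncomputable def Ktilde12 (s : ℝ) : ℝ :=
  (s ^ ((3 : ℝ) / 2) + s ^ (-(3 : ℝ) / 2)) * Real.log ((s + 1) / (s - 1))
    - 2 * s ^ (-(1 : ℝ) / 2) * (s ^ 2 + s + 1) / (s + 1)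

/-- sqrt-form of the kernel, equal to `Ktilde12` for `s > 1`. -/
noncomputable def Kt (s : ℝ) : ℝ :=
  (Real.sqrt s ^ 3 + ((Real.sqrt s)⁻¹) ^ 3) * (Real.log (s + 1) - Real.log (s - 1))
    - 2 * (Real.sqrt s)⁻¹ * (s ^ 2 + s + 1) / (s + 1)

/-- First derivative of the kernel (for `s > 1`). -/
noncomputable def K1 (s : ℝ) : ℝ :=
  3 / 2 * (Real.sqrt s - ((Real.sqrt s)⁻¹) ^ 5) * (Real.log (s + 1) - Real.log (s - 1))
  + (Real.sqrt s ^ 3 + ((Real.sqrt s)⁻¹) ^ 3) * (1 / (s + 1) - 1 / (s - 1))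
  + ((Real.sqrt s)⁻¹) ^ 3 * (s ^ 2 + s + 1) / (s + 1)
  - 2 * (Real.sqrt s)⁻¹ * (s ^ 2 + 2 * s) / (s + 1) ^ 2

/-- Second derivative of the kernel (for `s > 1`). -/
noncomputable def K2 (s : ℝ) : ℝ :=
  3 / 4 * ((Real.sqrt s)⁻¹ + 5 * ((Real.sqrt s)⁻¹) ^ 7) * (Real.log (s + 1) - Real.log (s - 1))
  + 3 * (Real.sqrt s - ((Real.sqrt s)⁻¹) ^ 5) * (1 / (s + 1) - 1 / (s - 1))
  + (Real.sqrt s ^ 3 + ((Real.sqrt s)⁻¹) ^ 3) * (1 / (s - 1) ^ 2 - 1 / (s + 1) ^ 2)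
  - 3 / 2 * ((Real.sqrt s)⁻¹) ^ 5 * (s ^ 2 + s + 1) / (s + 1)
  + 2 * ((Real.sqrt s)⁻¹) ^ 3 * (s ^ 2 + 2 * s) / (s + 1) ^ 2
  - 4 * (Real.sqrt s)⁻¹ / (s + 1) ^ 3

lemma Kt_eq {s : ℝ} (hs : 1 < s) : Ktilde12 s = Kt s := by
  have h0 : (0:ℝ) ≤ s := by linarith
  have h32 : s ^ ((3:ℝ)/2) = Real.sqrt s ^ 3 := by
    rw [show ((3:ℝ)/2) = (1/2 : ℝ) * (3:ℕ) by norm_num, Real.rpow_mul h0,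
      Real.rpow_natCast, Real.sqrt_eq_rpow]
  have hn32 : s ^ (-(3:ℝ)/2) = ((Real.sqrt s)⁻¹) ^ 3 := by
    rw [show (-(3:ℝ)/2) = -((3:ℝ)/2) by ring, Real.rpow_neg h0, h32, inv_pow]
  have hn12 : s ^ (-(1:ℝ)/2) = (Real.sqrt s)⁻¹ := by
    rw [show (-(1:ℝ)/2) = -((1:ℝ)/2) by ring, Real.rpow_neg h0, ← Real.sqrt_eq_rpow]
  have hlog : Real.log ((s+1)/(s-1)) = Real.log (s+1) - Real.log (s-1) :=
    Real.log_div (by linarith) (by linarith)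
  rw [Ktilde12, Kt, h32, hn32, hn12, hlog]

lemma hasDerivAt_Kt {s : ℝ} (hs : 1 < s) : HasDerivAt Kt (K1 s) s := by
  have hs0 : s ≠ 0 := by linarith
  have hq0 : Real.sqrt s ≠ 0 := by positivity
  have hp1 : s + 1 ≠ 0 := by linarith
  have hm1 : s - 1 ≠ 0 := sub_ne_zero.mpr (by linarith)
  have hq := Real.hasDerivAt_sqrt hs0
  have hqi := hq.inv hq0
  have hq3 := hq.pow 3
  have hqi3 := hqi.pow 3
  have hlogp := (((hasDerivAt_id s).add_const 1).log hp1)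
  have hlogm := (((hasDerivAt_id s).sub_const 1).log hm1)
  have hpoly : HasDerivAt (fun x : ℝ => x ^ 2 + x + 1) (2*s + 1) s := by
    simpa using ((hasDerivAt_pow 2 s).add (hasDerivAt_id s)).add_const 1
  have hF := (hq3.add hqi3).mul (hlogp.sub hlogm)
  have hB := ((hqi.const_mul 2).mul hpoly).div ((hasDerivAt_id s).add_const 1) hp1
  have h := hF.sub hB
  have hKt : Kt = fun x => (Real.sqrt x ^ 3 + ((Real.sqrt x)⁻¹) ^ 3) *
      (Real.log (x + 1) - Real.log (x - 1)) - 2 * (Real.sqrt x)⁻¹ * (x ^ 2 + x + 1) / (x + 1) := rfl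
  rw [hKt]
  refine h.congr_deriv ?_
  symm
  have hsq : s = Real.sqrt s ^ 2 := (Real.sq_sqrt (by linarith : (0:ℝ) ≤ s)).symm
  rw [K1]
  simp only [id_eq, Nat.cast_ofNat]
  norm_num
  set q := Real.sqrt s with hqd
  rw [hsq]
  have hq1 : 1 < q := by nlinarith [Real.sqrt_nonneg s]
  have h1 : q ≠ 0 := by positivity
  have h2 : q^2 + 1 ≠ 0 := by positivity
  have h3 : q^2 - 1 ≠ 0 := by nlinarith
  field_simp
  ring

lemma hasDerivAt_K1 {s : ℝ} (hs : 1 < s) : HasDerivAt K1 (K2 s) s := by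
  have hs0 : s ≠ 0 := by linarith
  have hq0 : Real.sqrt s ≠ 0 := by positivity
  have hp1 : s + 1 ≠ 0 := by linarith
  have hm1 : s - 1 ≠ 0 := sub_ne_zero.mpr (by linarith)
  have hq := Real.hasDerivAt_sqrt hs0
  have hqi := hq.inv hq0
  have hq3 := hq.pow 3
  have hqi3 := hqi.pow 3
  have hqi5 := hqi.pow 5
  have hid1 := (hasDerivAt_id s).add_const (1:ℝ)
  have hidm := (hasDerivAt_id s).sub_const (1:ℝ)
  have hlogp := hid1.log hp1
  have hlogm := hidm.log hm1
  have hpoly : HasDerivAt (fun x : ℝ => x ^ 2 + x + 1) (2*s + 1) s := by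
    simpa using ((hasDerivAt_pow 2 s).add (hasDerivAt_id s)).add_const 1
  have hpoly2 : HasDerivAt (fun x : ℝ => x ^ 2 + 2*x) (2*s + 2) s := by
    simpa [Pi.add_def] using (hasDerivAt_pow 2 s).add ((hasDerivAt_id s).const_mul 2)
  have hinv1 := (hasDerivAt_const s (1:ℝ)).div hid1 hp1
  have hinv2 := (hasDerivAt_const s (1:ℝ)).div hidm hm1
  have hinvsq1 := (hasDerivAt_const s (1:ℝ)).div (hid1.pow 2) (pow_ne_zero 2 hp1)
  have hinvsq2 := (hasDerivAt_const s (1:ℝ)).div (hidm.pow 2) (pow_ne_zero 2 hm1)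
  have h1 := ((hq.sub hqi5).const_mul (3/2 : ℝ)).mul (hlogp.sub hlogm)
  have h2 := (hq3.add hqi3).mul (hinv1.sub hinv2)
  have h3 := (hqi3.mul hpoly).div hid1 hp1
  have h4 := ((hqi.const_mul 2).mul hpoly2).div (hid1.pow 2) (pow_ne_zero 2 hp1)
  have h := ((h1.add h2).add h3).sub h4
  have hK1 : K1 = fun x => 3 / 2 * (Real.sqrt x - ((Real.sqrt x)⁻¹) ^ 5) *
        (Real.log (x + 1) - Real.log (x - 1))
      + (Real.sqrt x ^ 3 + ((Real.sqrt x)⁻¹) ^ 3) * (1 / (x + 1) - 1 / (x - 1))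
      + ((Real.sqrt x)⁻¹) ^ 3 * (x ^ 2 + x + 1) / (x + 1)
      - 2 * (Real.sqrt x)⁻¹ * (x ^ 2 + 2 * x) / (x + 1) ^ 2 := rfl
  rw [hK1]
  refine h.congr_deriv ?_
  symm
  have hsq : s = Real.sqrt s ^ 2 := (Real.sq_sqrt (by linarith : (0:ℝ) ≤ s)).symm
  rw [K2]
  simp only [id_eq, Nat.cast_ofNat]
  norm_num
  set q := Real.sqrt s with hqd
  rw [hsq]
  have hq1 : 1 < q := by nlinarith [Real.sqrt_nonneg s]
  have hh1 : q ≠ 0 := by positivity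
  have hh2 : q^2 + 1 ≠ 0 := by positivity
  have hh3 : q^2 - 1 ≠ 0 := by nlinarith
  field_simp
  ring

lemma Ppos {q : ℝ} (hq1 : 1 ≤ q) (hq13 : q ≤ 13/10) :
    0 < 9/2*q^2 - 9/2*q^4 - 27/2*q^6 + 9*q^8 + 59/2*q^10 - 9/2*q^12 - 9/2*q^14 := by
  obtain ⟨a, ha0, rfl⟩ : ∃ a, 0 ≤ a ∧ q = 1 + a := ⟨q - 1, by linarith, by ring⟩
  have ha : a ≤ 3/10 := by linarith
  have p2 : a^2 ≤ (3/10)*a := by nlinarith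
  have p3 : a^3 ≤ (3/10)^2*a := by nlinarith
  have p4 : a^4 ≤ (3/10)^3*a := by nlinarith
  have p5 : a^5 ≤ (3/10)^4*a := by nlinarith
  have p6 : a^6 ≤ (3/10)^5*a := by nlinarith
  have p7 : a^7 ≤ (3/10)^6*a := by nlinarith
  have p8 : a^8 ≤ (3/10)^7*a := by nlinarith
  have p9 : a^9 ≤ (3/10)^8*a := by nlinarith
  have p10 : a^10 ≤ (3/10)^9*a := by nlinarith
  have p11 : a^11 ≤ (3/10)^10*a := by nlinarith
  have p12 : a^12 ≤ (3/10)^11*a := by nlinarith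
  have p13 : a^13 ≤ (3/10)^12*a := by nlinarith
  have p14 : a^14 ≤ (3/10)^13*a := by nlinarith
  have q2 : 0 ≤ a^2 := by positivity
  have q3 : 0 ≤ a^3 := by positivity
  nlinarith [p4, p5, p6, p7, p8, p9, p10, p11, p12, p13, p14, q2, q3, ha0]

/-- The core inequality. -/
lemma core_ineq {s : ℝ} (hs1 : 1 < s) (hs2 : s ≤ 5/3) :
    0 < s ^ 2 * K2 s + s * K1 s := by
  have h0 : (0:ℝ) ≤ s := by linarith
  have hp1 : (0:ℝ) < s + 1 := by linarith
  have hm1 : (0:ℝ) < s - 1 := by linarith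
  -- log lower bound
  have hX : 2 / (s + 1) ≤ Real.log (s + 1) - Real.log (s - 1) := by
    have h := Real.log_le_sub_one_of_pos (show (0:ℝ) < (s-1)/(s+1) by positivity)
    rw [Real.log_div (ne_of_gt hm1) (ne_of_gt hp1)] at h
    have heq : (s-1)/(s+1) - 1 = -(2/(s+1)) := by field_simp; ring
    rw [heq] at h
    linarith
  have hsq : s = Real.sqrt s ^ 2 := (Real.sq_sqrt h0).symm
  set q := Real.sqrt s with hqd
  have hq0 : (0:ℝ) ≤ q := Real.sqrt_nonneg s
  have hq1 : 1 < q := by nlinarith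
  have hq13 : q ≤ 13/10 := by nlinarith
  have hh1 : q ≠ 0 := by positivity
  have hh2 : q^2 + 1 ≠ 0 := by positivity
  have hh3 : q^2 - 1 ≠ 0 := by nlinarith
  have hD : 0 < q^5 * (q^2-1)^2 * (q^2+1)^3 := by
    have : 0 < q^2 - 1 := by nlinarith
    positivity
  -- decomposition
  have hdecomp : s ^ 2 * K2 s + s * K1 s
      = 9/4 * (q^3 + (q^3)⁻¹) * (Real.log (s + 1) - Real.log (s - 1))
        + (-(9/2)*q^4 - 9/2*q^6 + 9/2*q^8 + 25*q^10 + 9/2*q^12 - 9/2*q^14 - 9/2*q^16)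
          / (q^5 * (q^2-1)^2 * (q^2+1)^3) := by
    rw [K1, K2, ← hqd, hsq]
    field_simp
    ring
  -- polynomial positivity
  have hP := Ppos hq1.le hq13
  have hC : 0 < 9/4 * (q^3 + (q^3)⁻¹) := by positivity
  have hid2 : 9/4 * (q^3 + (q^3)⁻¹) * (2/(q^2+1))
        + (-(9/2)*q^4 - 9/2*q^6 + 9/2*q^8 + 25*q^10 + 9/2*q^12 - 9/2*q^14 - 9/2*q^16)
          / (q^5 * (q^2-1)^2 * (q^2+1)^3)
      = (9/2*q^2 - 9/2*q^4 - 27/2*q^6 + 9*q^8 + 59/2*q^10 - 9/2*q^12 - 9/2*q^14)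
          / (q^5 * (q^2-1)^2 * (q^2+1)^3) := by
    field_simp
    ring
  have hs1q : s + 1 = q^2 + 1 := by rw [hsq]
  have hX' : 2/(q^2+1) ≤ Real.log (s + 1) - Real.log (s - 1) := by rw [← hs1q]; exact hX
  have hmul : 9/4 * (q^3 + (q^3)⁻¹) * (2/(q^2+1))
      ≤ 9/4 * (q^3 + (q^3)⁻¹) * (Real.log (s + 1) - Real.log (s - 1)) :=
    mul_le_mul_of_nonneg_left hX' hC.le
  calc 0 < (9/2*q^2 - 9/2*q^4 - 27/2*q^6 + 9*q^8 + 59/2*q^10 - 9/2*q^12 - 9/2*q^14)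
          / (q^5 * (q^2-1)^2 * (q^2+1)^3) := div_pos hP hD
    _ = 9/4 * (q^3 + (q^3)⁻¹) * (2/(q^2+1))
        + (-(9/2)*q^4 - 9/2*q^6 + 9/2*q^8 + 25*q^10 + 9/2*q^12 - 9/2*q^14 - 9/2*q^16)
          / (q^5 * (q^2-1)^2 * (q^2+1)^3) := hid2.symm
    _ ≤ 9/4 * (q^3 + (q^3)⁻¹) * (Real.log (s + 1) - Real.log (s - 1))
        + (-(9/2)*q^4 - 9/2*q^6 + 9/2*q^8 + 25*q^10 + 9/2*q^12 - 9/2*q^14 - 9/2*q^16)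
          / (q^5 * (q^2-1)^2 * (q^2+1)^3) := by linarith
    _ = s ^ 2 * K2 s + s * K1 s := hdecomp.symm

lemma hasDerivAt_Ktilde12 {s : ℝ} (hs : 1 < s) : HasDerivAt Ktilde12 (K1 s) s :=
  (hasDerivAt_Kt hs).congr_of_eventuallyEq <| by
    filter_upwards [Ioi_mem_nhds hs] with y hy using Kt_eq hy

lemma deriv_Ktilde12 {s : ℝ} (hs : 1 < s) : deriv Ktilde12 s = K1 s :=
  (hasDerivAt_Ktilde12 hs).deriv

lemma deriv_deriv_Ktilde12 {s : ℝ} (hs : 1 < s) : deriv (deriv Ktilde12) s = K2 s := by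
  have hev : deriv Ktilde12 =ᶠ[nhds s] K1 := by
    filter_upwards [Ioi_mem_nhds hs] with y hy using deriv_Ktilde12 hy
  rw [hev.deriv_eq]
  exact (hasDerivAt_K1 hs).deriv

/-- Condition (4.18) of Lemma 4.2 with `x₀ = log(5/3)` (Appendix A.5.1):
`s² K̃_{1,2}''(s) + s K̃_{1,2}'(s) > 0` on `(1, 5/3]`; equivalently
`W(x) = K̃_{1,2}(e^x)` satisfies `W''(x) > 0` on `(0, log(5/3)]`. -/
theorem Ktilde12_convexity_near_one :
    (∀ s ∈ Ioc (1 : ℝ) (5 / 3),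
      0 < s ^ 2 * deriv (deriv Ktilde12) s + s * deriv Ktilde12 s) ∧
    (∀ x ∈ Ioc (0 : ℝ) (Real.log (5 / 3)),
      0 < deriv (deriv (fun t => Ktilde12 (Real.exp t))) x) := by
  constructor
  · rintro s ⟨hs1, hs2⟩
    rw [deriv_Ktilde12 hs1, deriv_deriv_Ktilde12 hs1]
    exact core_ineq hs1 hs2
  · rintro x ⟨hx1, hx2⟩
    have hex : ∀ t : ℝ, 0 < t → 1 < Real.exp t := fun t ht => by
      calc (1:ℝ) = Real.exp 0 := Real.exp_zero.symm
        _ < Real.exp t := Real.exp_lt_exp.mpr ht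
    have hW1 : ∀ t : ℝ, 0 < t →
        HasDerivAt (fun u => Ktilde12 (Real.exp u)) (K1 (Real.exp t) * Real.exp t) t :=
      fun t ht => (hasDerivAt_Ktilde12 (hex t ht)).comp t (Real.hasDerivAt_exp t)
    have hev : deriv (fun t => Ktilde12 (Real.exp t)) =ᶠ[nhds x]
        fun t => K1 (Real.exp t) * Real.exp t := by
      filter_upwards [Ioi_mem_nhds hx1] with y hy using (hW1 y hy).deriv
    rw [hev.deriv_eq]
    have hW2 : HasDerivAt (fun t => K1 (Real.exp t) * Real.exp t)
        ((K2 (Real.exp x) * Real.exp x) * Real.exp x + K1 (Real.exp x) * Real.exp x) x :=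
      (((hasDerivAt_K1 (hex x hx1)).comp x (Real.hasDerivAt_exp x))).mul (Real.hasDerivAt_exp x)
    rw [hW2.deriv]
    have h1 : 1 < Real.exp x := hex x hx1
    have h2 : Real.exp x ≤ 5/3 := by
      calc Real.exp x ≤ Real.exp (Real.log (5/3)) := Real.exp_le_exp.mpr hx2
        _ = 5/3 := Real.exp_log (by norm_num)
    have := core_ineq h1 h2
    nlinarith [this]
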